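/- Let 𝒳 ⊂ ℝ^{n_x} be a hyperrectangle of positive Lebesgue measure, q₀ a continuous probability density on 𝒳, q a continuous Markov kernel density on 𝒳 × 𝒳, K ∈ ℕ a horizon, and T the induced trajectory density on 𝒮 = 𝒳^{K+1}. Let (𝒳_i)_{i∈X} be a finite hyperrectangular partition of 𝒳 (|X| = N) with initial weights π, polytopes ℙ_i, and per-step functional Φ as defined. Let p be the discretization of T over the induced trajectory partition, i.e., p(i_0, …, i_K) = ∫_{𝒳_{i_0} × ⋯ × 𝒳_{i_K}} T(s) ds. Define the recursions V̲_K(i) = V̄_K(i) = 0 and, for k = K−1, …, 0, V̲_k(i) = min_{p′∈ℙ_i} Φ(p′, V̲_{k+1}) and V̄_k(i) = max_{p′∈ℙ_i} Φ(p′, V̄_{k+1}). Then Φ(π, V̲_0) ≤ KL_D(p‖pᵘ) ≤ Φ(π, V̄_0), where KL_D(p‖pᵘ) = Σ_{(i_0,…,i_K)∈X^{K+1}} p(i_0,…,i_K) log(p(i_0,…,i_K) λ(𝒳)^{K+1} / ∏_{k=0}^{K} λ(𝒳_{i_k})). -/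

import Mathlib

open MeasureTheory Real Finset

noncomputable section

lemma aux_sum_snoc {n N : ℕ} (f : (Fin (n+1) → Fin N) → ℝ) :
    ∑ t' : Fin (n+1) → Fin N, f t'
      = ∑ t : Fin n → Fin N, ∑ j : Fin N, f (Fin.snoc t j) := by
  rw [← (Fin.snocEquiv (fun _ => Fin N)).sum_comp f, Fintype.sum_prod_type]
  rw [Finset.sum_comm]
  rfl

lemma aux_mul_log_lower {x c : ℝ} (hx0 : 0 ≤ x) (hx1 : x ≤ 1) (hc : 0 < c) :
    -1 - |Real.log c| ≤ x * Real.log (x * c) := by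
  rcases eq_or_lt_of_le hx0 with h | h
  · rw [← h]
    have := abs_nonneg (Real.log c)
    simp only [zero_mul]
    linarith
  · rw [Real.log_mul (ne_of_gt h) (ne_of_gt hc)]
    have h1 : Real.log (1/x) ≤ 1/x - 1 := Real.log_le_sub_one_of_pos (by positivity)
    rw [one_div, Real.log_inv] at h1
    have hxlogx : x - 1 ≤ x * Real.log x := by
      have := mul_le_mul_of_nonneg_left h1 (le_of_lt h)
      have hx' : x * x⁻¹ = 1 := mul_inv_cancel₀ (ne_of_gt h)
      nlinarith
    have h2 : -|Real.log c| ≤ x * Real.log c := by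
      rcases le_or_gt 0 (Real.log c) with hl | hl
      · calc -|Real.log c| ≤ 0 := by simp [abs_nonneg]
          _ ≤ x * Real.log c := by positivity
      · rw [abs_of_neg hl]; nlinarith
    nlinarith

lemma aux_mul_log_upper {x c : ℝ} (hx0 : 0 ≤ x) (hx1 : x ≤ 1) (hc : 0 < c) :
    x * Real.log (x * c) ≤ |Real.log c| := by
  rcases eq_or_lt_of_le hx0 with h | h
  · rw [← h]; simp [abs_nonneg]
  · rw [Real.log_mul (ne_of_gt h) (ne_of_gt hc)]
    have hxlogx : x * Real.log x ≤ 0 :=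
      mul_nonpos_of_nonneg_of_nonpos (le_of_lt h) (Real.log_nonpos hx0 hx1)
    have h2 : x * Real.log c ≤ |Real.log c| := by
      rcases le_or_gt 0 (Real.log c) with hl | hl
      · calc x * Real.log c ≤ 1 * Real.log c := by nlinarith
          _ = Real.log c := one_mul _
          _ ≤ |Real.log c| := le_abs_self _
      · calc x * Real.log c ≤ 0 := by nlinarith
          _ ≤ |Real.log c| := abs_nonneg _
    nlinarith

lemma aux_setIntegral_pi_split {α : Type*} [MeasureSpace α] [SigmaFinite (volume : Measure α)]
    (n : ℕ) (S : Fin (n+1) → Set α)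
    (G : α → (Fin n → α) → ℝ)
    (hInt : IntegrableOn (fun w : α × (Fin n → α) => G w.1 w.2)
      ((S (Fin.last n)) ×ˢ Set.univ.pi (fun m => S (Fin.castSucc m))) (volume.prod volume)) :
    ∫ x in Set.univ.pi S, G (x (Fin.last n)) (fun m => x (Fin.castSucc m))
      = ∫ z in Set.univ.pi (fun m : Fin n => S (Fin.castSucc m)), ∫ y in S (Fin.last n), G y z := by
  have hmp : MeasurePreserving (MeasurableEquiv.piFinSuccAbove (fun _ : Fin (n+1) => α) (Fin.last n))
      volume ((volume : Measure α).prod (volume : Measure (Fin n → α))) := by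
    have := measurePreserving_piFinSuccAbove (fun _ : Fin (n+1) => (volume : Measure α)) (Fin.last n)
    simpa [MeasureTheory.volume_pi, Fin.succAbove_last] using this
  set e := MeasurableEquiv.piFinSuccAbove (fun _ : Fin (n+1) => α) (Fin.last n) with he
  have happ : ∀ x : Fin (n+1) → α, e x = (x (Fin.last n), fun m => x (Fin.castSucc m)) := by
    intro x
    simp [he, MeasurableEquiv.piFinSuccAbove, Fin.insertNthEquiv, Fin.removeNth,
      Fin.succAbove_last]
    rfl
  have hset : Set.univ.pi S
      = e ⁻¹' ((S (Fin.last n)) ×ˢ Set.univ.pi (fun m => S (Fin.castSucc m))) := by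
    ext x
    simp only [Set.mem_preimage, happ, Set.mem_prod, Set.mem_pi, Set.mem_univ, true_implies]
    constructor
    · intro h; exact ⟨h _, fun m => h _⟩
    · rintro ⟨h1, h2⟩ i
      rcases Fin.eq_castSucc_or_eq_last i with ⟨m, rfl⟩ | rfl
      · exact h2 m
      · exact h1
  have hfun : (fun x : Fin (n+1) → α => G (x (Fin.last n)) (fun m => x (Fin.castSucc m)))
      = fun x => (fun w : α × (Fin n → α) => G w.1 w.2) (e x) := by
    funext x; rw [happ]
  rw [hfun, hset]
  rw [hmp.setIntegral_preimage_emb e.measurableEmbedding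
    (fun w : α × (Fin n → α) => G w.1 w.2)
    ((S (Fin.last n)) ×ˢ Set.univ.pi (fun m => S (Fin.castSucc m)))]
  rw [← Measure.prod_restrict]
  rw [MeasureTheory.integral_prod_symm _ (by rwa [Measure.prod_restrict])]

/-- IMC abstraction sandwich bound on the discrete KL divergence to uniform
of the discretized trajectory distribution: `Φ(π, V̲₀) ≤ KL_D(p‖pᵘ) ≤ Φ(π, V̄₀)`. -/
theorem imc_abstraction_sandwich_bounds
    (nx N K : ℕ)
    (a b : Fin nx → ℝ)
    (𝒳 : Set (Fin nx → ℝ)) (h𝒳 : 𝒳 = Set.Icc a b)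
    (h𝒳vol : 0 < volume 𝒳)
    (q0 : (Fin nx → ℝ) → ℝ) (q : (Fin nx → ℝ) → (Fin nx → ℝ) → ℝ)
    (hq0cont : ContinuousOn q0 𝒳)
    (hq0nonneg : ∀ x ∈ 𝒳, 0 ≤ q0 x)
    (hq0int : (∫ x in 𝒳, q0 x) = 1)
    (hqcont : ContinuousOn (fun z : (Fin nx → ℝ) × (Fin nx → ℝ) => q z.1 z.2) (𝒳 ×ˢ 𝒳))
    (hqnonneg : ∀ x ∈ 𝒳, ∀ x' ∈ 𝒳, 0 ≤ q x x')
    (hqint : ∀ x ∈ 𝒳, (∫ x' in 𝒳, q x x') = 1)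
    -- hyperrectangular partition of 𝒳
    (Xp : Fin N → Set (Fin nx → ℝ))
    (hXrect : ∀ i, ∃ α β : Fin nx → ℝ, Xp i = Set.Icc α β)
    (hXpos : ∀ i, 0 < volume (Xp i))
    (hXcover : (⋃ i, Xp i) = 𝒳)
    (hXdisj : ∀ i j, i ≠ j → volume (Xp i ∩ Xp j) = 0)
    -- abstraction data
    (pi0 : Fin N → ℝ) (hpi0 : ∀ i, pi0 i = ∫ x in Xp i, q0 x)
    (Pup Plow : Fin N → Fin N → ℝ)
    (hPup : ∀ i j, IsGreatest ((fun x => ∫ x' in Xp j, q x x') '' Xp i) (Pup i j))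
    (hPlow : ∀ i j, IsLeast ((fun x => ∫ x' in Xp j, q x x') '' Xp i) (Plow i j))
    (ℙ : Fin N → Set (Fin N → ℝ))
    (hℙ : ∀ i, ℙ i = {p' : Fin N → ℝ |
        (∀ j, 0 ≤ p' j) ∧ (∑ j, p' j) = 1 ∧ ∀ j, Plow i j ≤ p' j ∧ p' j ≤ Pup i j})
    (Φ : (Fin N → ℝ) → (Fin N → ℝ) → ℝ)
    (hΦ : ∀ p' V, Φ p' V =
        (∑ j, p' j * Real.log (p' j * (volume 𝒳).toReal / (volume (Xp j)).toReal))
        + ∑ j, p' j * V j)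
    -- backward value recursions (minimization and maximization)
    (Vlow Vup : ℕ → Fin N → ℝ)
    (hVlowK : ∀ i, Vlow K i = 0) (hVupK : ∀ i, Vup K i = 0)
    (hVlowrec : ∀ k, k < K → ∀ i, Vlow k i = sInf ((fun p' => Φ p' (Vlow (k + 1))) '' ℙ i))
    (hVuprec : ∀ k, k < K → ∀ i, Vup k i = sSup ((fun p' => Φ p' (Vup (k + 1))) '' ℙ i))
    -- trajectory density and the discretization of its law over the induced partition
    (T : (Fin (K + 1) → Fin nx → ℝ) → ℝ)
    (hT : ∀ s, T s = q0 (s 0) * ∏ k : Fin K, q (s k.castSucc) (s k.succ))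
    (p : (Fin (K + 1) → Fin N) → ℝ)
    (hp : ∀ t, p t = ∫ s in (Set.univ.pi fun k => Xp (t k)), T s) :
    Φ pi0 (Vlow 0)
      ≤ (∑ t : Fin (K + 1) → Fin N, p t *
            Real.log (p t * (volume 𝒳).toReal ^ (K + 1) / ∏ k, (volume (Xp (t k))).toReal))
    ∧ (∑ t : Fin (K + 1) → Fin N, p t *
            Real.log (p t * (volume 𝒳).toReal ^ (K + 1) / ∏ k, (volume (Xp (t k))).toReal))
      ≤ Φ pi0 (Vup 0) := by
  classical
  -- basic facts about the sets
  have hXsub : ∀ i, Xp i ⊆ 𝒳 := fun i => hXcover ▸ Set.subset_iUnion Xp i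
  have hXmeas : ∀ i, MeasurableSet (Xp i) := by
    intro i; obtain ⟨α, β, h⟩ := hXrect i; rw [h]; exact measurableSet_Icc
  have hXcomp : ∀ i, IsCompact (Xp i) := by
    intro i; obtain ⟨α, β, h⟩ := hXrect i; rw [h]; exact isCompact_Icc
  have h𝒳meas : MeasurableSet 𝒳 := h𝒳 ▸ measurableSet_Icc
  have h𝒳comp : IsCompact 𝒳 := h𝒳 ▸ isCompact_Icc
  have hlXpos : 0 < (volume 𝒳).toReal :=
    ENNReal.toReal_pos (ne_of_gt h𝒳vol) h𝒳comp.measure_lt_top.ne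
  have hlXppos : ∀ i, 0 < (volume (Xp i)).toReal := fun i =>
    ENNReal.toReal_pos (ne_of_gt (hXpos i)) (hXcomp i).measure_lt_top.ne
  -- facts about the transition kernel slices
  have hgup : ∀ i j, ∀ x ∈ Xp i, (∫ x' in Xp j, q x x') ≤ Pup i j :=
    fun i j x hx => (hPup i j).2 ⟨x, hx, rfl⟩
  have hglow : ∀ i j, ∀ x ∈ Xp i, Plow i j ≤ (∫ x' in Xp j, q x x') :=
    fun i j x hx => (hPlow i j).2 ⟨x, hx, rfl⟩
  have hqxcont : ∀ x ∈ 𝒳, ContinuousOn (fun x' => q x x') 𝒳 := by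
    intro x hx
    exact hqcont.comp (Continuous.continuousOn (continuous_const.prodMk continuous_id))
      (fun x' hx' => Set.mk_mem_prod hx hx')
  have hgnonneg : ∀ j, ∀ x ∈ 𝒳, 0 ≤ ∫ x' in Xp j, q x x' := fun j x hx =>
    setIntegral_nonneg (hXmeas j) (fun x' hx' => hqnonneg x hx x' (hXsub j hx'))
  have hgsum : ∀ x ∈ 𝒳, (∑ j, ∫ x' in Xp j, q x x') = 1 := by
    intro x hx
    have hInt : IntegrableOn (fun x' => q x x') 𝒳 volume :=
      (hqxcont x hx).integrableOn_compact' h𝒳comp h𝒳meas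
    calc (∑ j, ∫ x' in Xp j, q x x') = ∑' j, ∫ x' in Xp j, q x x' := (tsum_fintype _).symm
      _ = ∫ x' in ⋃ j, Xp j, q x x' :=
          (integral_iUnion_ae (fun i => (hXmeas i).nullMeasurableSet)
            (fun i j hij => hXdisj i j hij) (by rw [hXcover]; exact hInt)).symm
      _ = ∫ x' in 𝒳, q x x' := by rw [hXcover]
      _ = 1 := hqint x hx
  -- the prefix trajectory densities and their discretizations
  set D : (k : ℕ) → (Fin (k+1) → (Fin nx → ℝ)) → ℝ :=
    fun k s => q0 (s 0) * ∏ m : Fin k, q (s (Fin.castSucc m)) (s (Fin.succ m)) with hD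
  set P : (k : ℕ) → (Fin (k+1) → Fin N) → ℝ :=
    fun k t => ∫ s in Set.univ.pi (fun m => Xp (t m)), D k s with hPdef
  have hDcont : ∀ k, ContinuousOn (D k) (Set.univ.pi (fun _ : Fin (k+1) => 𝒳)) := by
    intro k
    apply ContinuousOn.mul
    · refine ContinuousOn.comp' (g := q0) (f := fun s : Fin (k+1) → Fin nx → ℝ => s 0)
        (t := 𝒳) (s := Set.univ.pi (fun _ : Fin (k+1) => 𝒳)) hq0cont
        (continuous_apply (0 : Fin (k+1))).continuousOn ?_
      intro s hs
      exact hs 0 (Set.mem_univ _)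
    · apply continuousOn_finset_prod
      intro m _
      refine ContinuousOn.comp' (g := fun z : (Fin nx → ℝ) × (Fin nx → ℝ) => q z.1 z.2)
        (f := fun s : Fin (k+1) → Fin nx → ℝ => (s (Fin.castSucc m), s (Fin.succ m)))
        (t := 𝒳 ×ˢ 𝒳) (s := Set.univ.pi (fun _ : Fin (k+1) => 𝒳)) hqcont
        ((continuous_apply _).prodMk (continuous_apply _)).continuousOn ?_
      intro s hs
      exact Set.mk_mem_prod (hs _ (Set.mem_univ _)) (hs _ (Set.mem_univ _))
  have hDnonneg : ∀ k (s : Fin (k+1) → Fin nx → ℝ), (∀ m, s m ∈ 𝒳) → 0 ≤ D k s := by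
    intro k s h
    exact mul_nonneg (hq0nonneg _ (h 0))
      (Finset.prod_nonneg fun m _ => hqnonneg _ (h _) _ (h _))
  have hpisub : ∀ k (t : Fin (k+1) → Fin N),
      (Set.univ.pi (fun m => Xp (t m))) ⊆ Set.univ.pi (fun _ : Fin (k+1) => 𝒳) :=
    fun k t => Set.pi_mono (fun m _ => hXsub (t m))
  have hpimeas : ∀ k (t : Fin (k+1) → Fin N),
      MeasurableSet (Set.univ.pi (fun m => Xp (t m))) :=
    fun k t => MeasurableSet.univ_pi (fun m => hXmeas (t m))
  have hpicomp : ∀ k (t : Fin (k+1) → Fin N),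
      IsCompact (Set.univ.pi (fun m => Xp (t m))) :=
    fun k t => isCompact_univ_pi (fun m => hXcomp (t m))
  have hDint : ∀ k (t : Fin (k+1) → Fin N),
      IntegrableOn (D k) (Set.univ.pi (fun m => Xp (t m))) volume :=
    fun k t => ((hDcont k).mono (hpisub k t)).integrableOn_compact' (hpicomp k t) (hpimeas k t)
  have hPnonneg : ∀ k (t : Fin (k+1) → Fin N), 0 ≤ P k t := by
    intro k t
    exact setIntegral_nonneg (hpimeas k t)
      (fun s hs => hDnonneg k s (fun m => hXsub _ (hs m (Set.mem_univ _))))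
  -- integrability of the product-form integrand for the marginalization step
  have hIntG : ∀ k (t : Fin (k+1) → Fin N) (j : Fin N),
      IntegrableOn (fun w : (Fin nx → ℝ) × (Fin (k+1) → Fin nx → ℝ) =>
          D k w.2 * q (w.2 (Fin.last k)) w.1)
        ((Xp j) ×ˢ Set.univ.pi (fun m => Xp (t m))) (volume.prod volume) := by
    intro k t j
    apply ContinuousOn.integrableOn_compact'
      ((hXcomp j).prod (hpicomp k t)) ((hXmeas j).prod (hpimeas k t))
    apply ContinuousOn.mul
    · exact (hDcont k).comp continuous_snd.continuousOn
        (fun w hw => fun m _ => hXsub _ (hw.2 m (Set.mem_univ _)))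
    · exact hqcont.comp
        (Continuous.continuousOn
          (((continuous_apply (Fin.last k)).comp continuous_snd).prodMk continuous_fst))
        (fun w hw => Set.mk_mem_prod (hXsub _ (hw.2 (Fin.last k) (Set.mem_univ _)))
          (hXsub j hw.1))
  -- the marginalization identity
  have hDsucc : ∀ k (x : Fin (k+2) → Fin nx → ℝ), D (k+1) x
      = D k (fun m => x (Fin.castSucc m))
        * q ((fun m => x (Fin.castSucc m)) (Fin.last k)) (x (Fin.last (k+1))) := by
    intro k x
    simp only [hD]
    rw [Fin.prod_univ_castSucc]
    simp only [Fin.succ_castSucc, Fin.castSucc_zero, Fin.succ_last]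
    ring
  have hmarg : ∀ k (t : Fin (k+1) → Fin N) (j : Fin N),
      P (k+1) (Fin.snoc t j) = ∫ z in Set.univ.pi (fun m => Xp (t m)),
        ∫ y in Xp j, D k z * q (z (Fin.last k)) y := by
    intro k t j
    have hint : IntegrableOn
        (fun w : (Fin nx → ℝ) × (Fin (k+1) → Fin nx → ℝ) =>
          (fun y z => D k z * q (z (Fin.last k)) y) w.1 w.2)
        (((fun m : Fin (k+2) => Xp ((Fin.snoc t j : Fin (k+2) → Fin N) m)) (Fin.last (k+1)))
          ×ˢ Set.univ.pi (fun m : Fin (k+1) =>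
            (fun m : Fin (k+2) => Xp ((Fin.snoc t j : Fin (k+2) → Fin N) m)) (Fin.castSucc m)))
        (volume.prod volume) := by
      simp only [Fin.snoc_last, Fin.snoc_castSucc]
      exact hIntG k t j
    have key := aux_setIntegral_pi_split (k+1)
      (fun m : Fin (k+2) => Xp ((Fin.snoc t j : Fin (k+2) → Fin N) m))
      (fun y z => D k z * q (z (Fin.last k)) y) hint
    simp only [Fin.snoc_last, Fin.snoc_castSucc] at key
    rw [← key]
    simp only [hPdef]
    apply setIntegral_congr_fun (hpimeas (k+1) (Fin.snoc t j))
    intro x _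
    exact hDsucc k x
  -- conditional transition facts
  have hIg : ∀ k (t : Fin (k+1) → Fin N) (j : Fin N),
      IntegrableOn (fun z => ∫ y in Xp j, D k z * q (z (Fin.last k)) y)
        (Set.univ.pi (fun m => Xp (t m))) volume := by
    intro k t j
    have hF : Integrable (fun w : (Fin nx → ℝ) × (Fin (k+1) → Fin nx → ℝ) =>
        D k w.2 * q (w.2 (Fin.last k)) w.1)
        ((volume.restrict (Xp j)).prod
          (volume.restrict (Set.univ.pi (fun m => Xp (t m))))) := by
      rw [Measure.prod_restrict]; exact hIntG k t j
    exact hF.integral_prod_right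
  have hinner : ∀ k (t : Fin (k+1) → Fin N) (j : Fin N),
      ∀ z ∈ Set.univ.pi (fun m => Xp (t m)),
        (∫ y in Xp j, D k z * q (z (Fin.last k)) y)
          = D k z * ∫ y in Xp j, q (z (Fin.last k)) y := by
    intro k t j z _
    exact integral_const_mul _ _
  have hsum : ∀ k (t : Fin (k+1) → Fin N), (∑ j, P (k+1) (Fin.snoc t j)) = P k t := by
    intro k t
    have hmem : ∀ z ∈ Set.univ.pi (fun m => Xp (t m)), z (Fin.last k) ∈ 𝒳 :=
      fun z hz => hXsub _ (hz (Fin.last k) (Set.mem_univ _))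
    calc (∑ j, P (k+1) (Fin.snoc t j))
        = ∑ j, ∫ z in Set.univ.pi (fun m => Xp (t m)),
            ∫ y in Xp j, D k z * q (z (Fin.last k)) y := by
          exact Finset.sum_congr rfl (fun j _ => hmarg k t j)
      _ = ∫ z in Set.univ.pi (fun m => Xp (t m)),
            ∑ j, ∫ y in Xp j, D k z * q (z (Fin.last k)) y :=
          (integral_finset_sum Finset.univ (fun j _ => hIg k t j)).symm
      _ = ∫ z in Set.univ.pi (fun m => Xp (t m)), D k z := by
          apply setIntegral_congr_fun (hpimeas k t)
          intro z hz
          have : ∀ j, (∫ y in Xp j, D k z * q (z (Fin.last k)) y)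
              = D k z * ∫ y in Xp j, q (z (Fin.last k)) y :=
            fun j => integral_const_mul _ _
          simp only [this]
          rw [← Finset.mul_sum, hgsum _ (hmem z hz), mul_one]
      _ = P k t := rfl
  have hPup' : ∀ k (t : Fin (k+1) → Fin N) (j : Fin N),
      P (k+1) (Fin.snoc t j) ≤ Pup (t (Fin.last k)) j * P k t := by
    intro k t j
    rw [hmarg k t j]
    have h1 : ∫ z in Set.univ.pi (fun m => Xp (t m)),
        (∫ y in Xp j, D k z * q (z (Fin.last k)) y)
        ≤ ∫ z in Set.univ.pi (fun m => Xp (t m)), Pup (t (Fin.last k)) j * D k z := by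
      apply setIntegral_mono_on (hIg k t j) ((hDint k t).const_mul _) (hpimeas k t)
      intro z hz
      rw [integral_const_mul]
      have hz1 : z (Fin.last k) ∈ Xp (t (Fin.last k)) := hz (Fin.last k) (Set.mem_univ _)
      have hD0 : 0 ≤ D k z := hDnonneg k z (fun m => hXsub _ (hz m (Set.mem_univ _)))
      have := hgup (t (Fin.last k)) j _ hz1
      calc D k z * ∫ y in Xp j, q (z (Fin.last k)) y
          ≤ D k z * Pup (t (Fin.last k)) j := mul_le_mul_of_nonneg_left this hD0
        _ = Pup (t (Fin.last k)) j * D k z := mul_comm _ _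
    calc (∫ z in Set.univ.pi (fun m => Xp (t m)),
          ∫ y in Xp j, D k z * q (z (Fin.last k)) y)
        ≤ ∫ z in Set.univ.pi (fun m => Xp (t m)), Pup (t (Fin.last k)) j * D k z := h1
      _ = Pup (t (Fin.last k)) j * P k t := integral_const_mul _ _
  have hPlow' : ∀ k (t : Fin (k+1) → Fin N) (j : Fin N),
      Plow (t (Fin.last k)) j * P k t ≤ P (k+1) (Fin.snoc t j) := by
    intro k t j
    rw [hmarg k t j]
    have h1 : ∫ z in Set.univ.pi (fun m => Xp (t m)), Plow (t (Fin.last k)) j * D k z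
        ≤ ∫ z in Set.univ.pi (fun m => Xp (t m)),
          (∫ y in Xp j, D k z * q (z (Fin.last k)) y) := by
      apply setIntegral_mono_on ((hDint k t).const_mul _) (hIg k t j) (hpimeas k t)
      intro z hz
      rw [integral_const_mul]
      have hz1 : z (Fin.last k) ∈ Xp (t (Fin.last k)) := hz (Fin.last k) (Set.mem_univ _)
      have hD0 : 0 ≤ D k z := hDnonneg k z (fun m => hXsub _ (hz m (Set.mem_univ _)))
      have := hglow (t (Fin.last k)) j _ hz1
      calc Plow (t (Fin.last k)) j * D k z
          = D k z * Plow (t (Fin.last k)) j := mul_comm _ _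
        _ ≤ D k z * ∫ y in Xp j, q (z (Fin.last k)) y := mul_le_mul_of_nonneg_left this hD0
    calc Plow (t (Fin.last k)) j * P k t
        = ∫ z in Set.univ.pi (fun m => Xp (t m)), Plow (t (Fin.last k)) j * D k z :=
          (integral_const_mul _ _).symm
      _ ≤ _ := h1
  have hPzero : ∀ k (t : Fin (k+1) → Fin N) (j : Fin N),
      P k t = 0 → P (k+1) (Fin.snoc t j) = 0 := by
    intro k t j h0
    have h1 := hPup' k t j
    rw [h0, mul_zero] at h1
    exact le_antisymm h1 (hPnonneg _ _)
  -- discretization facts at the endpoints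
  have hP0 : ∀ t : Fin 1 → Fin N, P 0 t = pi0 (t 0) := by
    intro t
    have happ : ∀ x : Fin 1 → Fin nx → ℝ,
        (MeasurableEquiv.funUnique (Fin 1) (Fin nx → ℝ)) x = x 0 := fun x => rfl
    have h1 : P 0 t = ∫ s in Set.univ.pi (fun m : Fin 1 => Xp (t m)), q0 (s 0) := by
      simp only [hPdef]
      apply setIntegral_congr_fun (hpimeas 0 t)
      intro s _
      simp [hD]
    have hpre : Set.univ.pi (fun m : Fin 1 => Xp (t m))
        = (MeasurableEquiv.funUnique (Fin 1) (Fin nx → ℝ)) ⁻¹' (Xp (t 0)) := by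
      ext x
      simp only [Set.mem_preimage, happ, Set.mem_pi, Set.mem_univ, true_implies]
      constructor
      · intro h; exact h 0
      · intro h m
        have hm : m = 0 := Subsingleton.elim m 0
        rw [hm]; exact h
    have hfe : (fun x : Fin 1 → Fin nx → ℝ => q0 (x 0))
        = fun x => q0 ((MeasurableEquiv.funUnique (Fin 1) (Fin nx → ℝ)) x) := by
      funext x; rw [happ]
    rw [h1, hfe, hpre]
    exact ((volume_preserving_funUnique (Fin 1) (Fin nx → ℝ)).setIntegral_preimage_emb
        (MeasurableEquiv.funUnique (Fin 1) (Fin nx → ℝ)).measurableEmbedding q0 (Xp (t 0))).trans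
      (hpi0 _).symm
  have hPfinal : ∀ t : Fin (K+1) → Fin N, p t = P K t := by
    intro t
    rw [hp]
    simp only [hPdef]
    apply setIntegral_congr_fun (hpimeas K t)
    intro s _
    rw [hT]
  -- bounds for Φ over the polytopes
  have hmem01 : ∀ i, ∀ c ∈ ℙ i, ∀ j, 0 ≤ c j ∧ c j ≤ 1 := by
    intro i c hc j
    rw [hℙ] at hc
    obtain ⟨h0, h1, _⟩ := hc
    refine ⟨h0 j, ?_⟩
    calc c j ≤ ∑ j', c j' := Finset.single_le_sum (fun j' _ => h0 j') (Finset.mem_univ j)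
      _ = 1 := h1
  have hPhi_lb : ∀ (V : Fin N → ℝ) i, ∀ c ∈ ℙ i,
      (∑ j, (-1 - |Real.log ((volume 𝒳).toReal / (volume (Xp j)).toReal)| - |V j|)) ≤ Φ c V := by
    intro V i c hc
    rw [hΦ, ← Finset.sum_add_distrib]
    apply Finset.sum_le_sum
    intro j _
    obtain ⟨h0, h1⟩ := hmem01 i c hc j
    have hlog := aux_mul_log_lower (x := c j)
      (c := (volume 𝒳).toReal / (volume (Xp j)).toReal) h0 h1
      (div_pos hlXpos (hlXppos j))
    have hV : -|V j| ≤ c j * V j := by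
      have habs : |c j * V j| ≤ |V j| := by
        rw [abs_mul]
        calc |c j| * |V j| ≤ 1 * |V j| := by
              apply mul_le_mul_of_nonneg_right _ (abs_nonneg _)
              rw [abs_of_nonneg h0]; exact h1
          _ = |V j| := one_mul _
      linarith [neg_abs_le (c j * V j)]
    have harg : c j * (volume 𝒳).toReal / (volume (Xp j)).toReal
        = c j * ((volume 𝒳).toReal / (volume (Xp j)).toReal) := by ring
    rw [harg]
    linarith
  have hPhi_ub : ∀ (V : Fin N → ℝ) i, ∀ c ∈ ℙ i,
      Φ c V ≤ (∑ j, (|Real.log ((volume 𝒳).toReal / (volume (Xp j)).toReal)| + |V j|)) := by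
    intro V i c hc
    rw [hΦ, ← Finset.sum_add_distrib]
    apply Finset.sum_le_sum
    intro j _
    obtain ⟨h0, h1⟩ := hmem01 i c hc j
    have hlog := aux_mul_log_upper (x := c j)
      (c := (volume 𝒳).toReal / (volume (Xp j)).toReal) h0 h1
      (div_pos hlXpos (hlXppos j))
    have hV : c j * V j ≤ |V j| := by
      have habs : |c j * V j| ≤ |V j| := by
        rw [abs_mul]
        calc |c j| * |V j| ≤ 1 * |V j| := by
              apply mul_le_mul_of_nonneg_right _ (abs_nonneg _)
              rw [abs_of_nonneg h0]; exact h1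
          _ = |V j| := one_mul _
      linarith [le_abs_self (c j * V j)]
    have harg : c j * (volume 𝒳).toReal / (volume (Xp j)).toReal
        = c j * ((volume 𝒳).toReal / (volume (Xp j)).toReal) := by ring
    rw [harg]
    linarith
  have hVlow_le : ∀ k, k < K → ∀ i, ∀ c ∈ ℙ i, Vlow k i ≤ Φ c (Vlow (k+1)) := by
    intro k hk i c hc
    rw [hVlowrec k hk i]
    apply csInf_le
    · refine ⟨∑ j, (-1 - |Real.log ((volume 𝒳).toReal / (volume (Xp j)).toReal)|
        - |Vlow (k+1) j|), ?_⟩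
      rintro y ⟨c', hc', rfl⟩
      exact hPhi_lb _ i c' hc'
    · exact ⟨c, hc, rfl⟩
  have hVup_ge : ∀ k, k < K → ∀ i, ∀ c ∈ ℙ i, Φ c (Vup (k+1)) ≤ Vup k i := by
    intro k hk i c hc
    rw [hVuprec k hk i]
    apply le_csSup
    · refine ⟨∑ j, (|Real.log ((volume 𝒳).toReal / (volume (Xp j)).toReal)|
        + |Vup (k+1) j|), ?_⟩
      rintro y ⟨c', hc', rfl⟩
      exact hPhi_ub _ i c' hc'
    · exact ⟨c, hc, rfl⟩
  -- conditional transition probabilities belong to the polytopes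
  have hcmem : ∀ k (t : Fin (k+1) → Fin N), P k t ≠ 0 →
      (fun j => P (k+1) (Fin.snoc t j) / P k t) ∈ ℙ (t (Fin.last k)) := by
    intro k t h0
    have hpos : 0 < P k t := lt_of_le_of_ne (hPnonneg k t) (Ne.symm h0)
    rw [hℙ]
    refine ⟨fun j => div_nonneg (hPnonneg _ _) (le_of_lt hpos), ?_, fun j => ⟨?_, ?_⟩⟩
    · rw [← Finset.sum_div, hsum k t, div_self h0]
    · rw [le_div_iff₀ hpos]
      exact hPlow' k t j
    · rw [div_le_iff₀ hpos]
      exact hPup' k t j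
  -- the key chain-rule identity for one step
  have hkey : ∀ k (t : Fin (k+1) → Fin N), P k t ≠ 0 → ∀ V : Fin N → ℝ,
      (∑ j, P (k+1) (Fin.snoc t j) *
        (Real.log (P (k+1) (Fin.snoc t j) * (volume 𝒳).toReal ^ (k+1+1)
            / ∏ m : Fin (k+1+1), (volume (Xp ((Fin.snoc t j : Fin (k+1+1) → Fin N) m))).toReal)
          + V j))
      = P k t * ((Real.log (P k t * (volume 𝒳).toReal ^ (k+1)
            / ∏ m, (volume (Xp (t m))).toReal))
          + Φ (fun j => P (k+1) (Fin.snoc t j) / P k t) V) := by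
    intro k t h0 V
    have hpos : 0 < P k t := lt_of_le_of_ne (hPnonneg k t) (Ne.symm h0)
    set c : Fin N → ℝ := fun j => P (k+1) (Fin.snoc t j) / P k t with hcdef
    set L : ℝ := Real.log (P k t * (volume 𝒳).toReal ^ (k+1)
      / ∏ m, (volume (Xp (t m))).toReal) with hL
    have hc1 : (∑ j, c j) = 1 := by
      simp only [hcdef]
      rw [← Finset.sum_div, hsum k t, div_self h0]
    have hprodpos : 0 < ∏ m : Fin (k+1), (volume (Xp (t m))).toReal :=
      Finset.prod_pos fun m _ => hlXppos (t m)
    have hprod : ∀ j, (∏ m : Fin (k+1+1),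
          (volume (Xp ((Fin.snoc t j : Fin (k+1+1) → Fin N) m))).toReal)
        = (∏ m : Fin (k+1), (volume (Xp (t m))).toReal) * (volume (Xp j)).toReal := by
      intro j
      rw [Fin.prod_univ_castSucc]
      simp [Fin.snoc_castSucc, Fin.snoc_last]
    have hterm : ∀ j, P (k+1) (Fin.snoc t j) *
        (Real.log (P (k+1) (Fin.snoc t j) * (volume 𝒳).toReal ^ (k+1+1)
            / ∏ m : Fin (k+1+1), (volume (Xp ((Fin.snoc t j : Fin (k+1+1) → Fin N) m))).toReal)
          + V j)
        = P k t * (c j * L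
            + (c j * Real.log (c j * (volume 𝒳).toReal / (volume (Xp j)).toReal)
              + c j * V j)) := by
      intro j
      have hPj : P (k+1) (Fin.snoc t j) = c j * P k t := by
        simp only [hcdef]
        field_simp
      rcases eq_or_lt_of_le (hPnonneg (k+1) (Fin.snoc t j)) with hz | hz
      · have hcz : c j = 0 := by
          simp only [hcdef, ← hz, zero_div]
        rw [← hz, hcz]
        simp
      · have hcpos : 0 < c j := by
          simp only [hcdef]
          exact div_pos hz hpos
        rw [hprod j, hPj]
        have harg : c j * P k t * (volume 𝒳).toReal ^ (k+1+1)
              / ((∏ m : Fin (k+1), (volume (Xp (t m))).toReal) * (volume (Xp j)).toReal)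
            = (P k t * (volume 𝒳).toReal ^ (k+1) / ∏ m, (volume (Xp (t m))).toReal)
              * (c j * (volume 𝒳).toReal / (volume (Xp j)).toReal) := by
          have h1 : (∏ m : Fin (k+1), (volume (Xp (t m))).toReal) ≠ 0 := ne_of_gt hprodpos
          have h2 : (volume (Xp j)).toReal ≠ 0 := ne_of_gt (hlXppos j)
          field_simp
          ring
        have hfac1 : 0 < P k t * (volume 𝒳).toReal ^ (k+1)
            / ∏ m, (volume (Xp (t m))).toReal := by positivity
        have hfac2 : 0 < c j * (volume 𝒳).toReal / (volume (Xp j)).toReal :=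
          div_pos (mul_pos hcpos hlXpos) (hlXppos j)
        rw [harg, Real.log_mul (ne_of_gt hfac1) (ne_of_gt hfac2), ← hL]
        ring
    calc (∑ j, P (k+1) (Fin.snoc t j) *
        (Real.log (P (k+1) (Fin.snoc t j) * (volume 𝒳).toReal ^ (k+1+1)
            / ∏ m : Fin (k+1+1), (volume (Xp ((Fin.snoc t j : Fin (k+1+1) → Fin N) m))).toReal)
          + V j))
        = ∑ j, P k t * (c j * L
            + (c j * Real.log (c j * (volume 𝒳).toReal / (volume (Xp j)).toReal)
              + c j * V j)) := Finset.sum_congr rfl (fun j _ => hterm j)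
      _ = P k t * (L + Φ c V) := by
          rw [hΦ, ← Finset.mul_sum]
          congr 1
          rw [Finset.sum_add_distrib, ← Finset.sum_mul, hc1, one_mul, Finset.sum_add_distrib]
      _ = P k t * (L + Φ (fun j => P (k+1) (Fin.snoc t j) / P k t) V) := by rw [hcdef]
  -- the per-horizon aggregated quantity
  set Bf : (k : ℕ) → (Fin N → ℝ) → ℝ := fun k V => ∑ t : Fin (k+1) → Fin N, P k t *
    (Real.log (P k t * (volume 𝒳).toReal ^ (k+1) / ∏ m, (volume (Xp (t m))).toReal)
      + V (t (Fin.last k))) with hBf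
  have hsnoc : ∀ k (V : Fin N → ℝ), Bf (k+1) V
      = ∑ t : Fin (k+1) → Fin N, ∑ j, P (k+1) (Fin.snoc t j) *
        (Real.log (P (k+1) (Fin.snoc t j) * (volume 𝒳).toReal ^ (k+1+1)
            / ∏ m : Fin (k+1+1), (volume (Xp ((Fin.snoc t j : Fin (k+1+1) → Fin N) m))).toReal)
          + V j) := by
    intro k V
    simp only [hBf]
    rw [aux_sum_snoc]
    apply Finset.sum_congr rfl
    intro t _
    apply Finset.sum_congr rfl
    intro j _
    rw [Fin.snoc_last]
  have hstep : ∀ k, k < K →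
      (Bf k (Vlow k) ≤ Bf (k+1) (Vlow (k+1)) ∧ Bf (k+1) (Vup (k+1)) ≤ Bf k (Vup k)) := by
    intro k hk
    constructor
    · rw [hsnoc k (Vlow (k+1))]
      conv_lhs => rw [hBf]
      apply Finset.sum_le_sum
      intro t _
      by_cases h0 : P k t = 0
      · rw [h0]
        have hz : ∀ j, P (k+1) (Fin.snoc t j) = 0 := fun j => hPzero k t j h0
        simp [hz]
      · rw [hkey k t h0 (Vlow (k+1))]
        have h1 : Vlow k (t (Fin.last k))
            ≤ Φ (fun j => P (k+1) (Fin.snoc t j) / P k t) (Vlow (k+1)) :=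
          hVlow_le k hk _ _ (hcmem k t h0)
        have hge := hPnonneg k t
        apply mul_le_mul_of_nonneg_left _ hge
        linarith
    · rw [hsnoc k (Vup (k+1))]
      conv_rhs => rw [hBf]
      apply Finset.sum_le_sum
      intro t _
      by_cases h0 : P k t = 0
      · rw [h0]
        have hz : ∀ j, P (k+1) (Fin.snoc t j) = 0 := fun j => hPzero k t j h0
        simp [hz]
      · rw [hkey k t h0 (Vup (k+1))]
        have h1 : Φ (fun j => P (k+1) (Fin.snoc t j) / P k t) (Vup (k+1))
            ≤ Vup k (t (Fin.last k)) :=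
          hVup_ge k hk _ _ (hcmem k t h0)
        have hge := hPnonneg k t
        apply mul_le_mul_of_nonneg_left _ hge
        linarith
  have hchain : ∀ k, k ≤ K →
      (Bf 0 (Vlow 0) ≤ Bf k (Vlow k) ∧ Bf k (Vup k) ≤ Bf 0 (Vup 0)) := by
    intro k
    induction k with
    | zero => intro _; exact ⟨le_refl _, le_refl _⟩
    | succ n ih =>
      intro h
      have hn : n < K := by omega
      obtain ⟨l, u⟩ := ih (by omega)
      exact ⟨l.trans (hstep n hn).1, (hstep n hn).2.trans u⟩
  have hbase : ∀ V : Fin N → ℝ, Bf 0 V = Φ pi0 V := by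
    intro V
    simp only [hBf]
    rw [hΦ]
    calc ∑ t : Fin 1 → Fin N, P 0 t *
          (Real.log (P 0 t * (volume 𝒳).toReal ^ (0+1)
            / ∏ m : Fin 1, (volume (Xp (t m))).toReal) + V (t (Fin.last 0)))
        = ∑ i : Fin N, pi0 i *
          (Real.log (pi0 i * (volume 𝒳).toReal / (volume (Xp i)).toReal) + V i) := by
          apply Fintype.sum_equiv (Equiv.funUnique (Fin 1) (Fin N))
          intro t
          have e0 : ∀ m : Fin 1, t m = t 0 := fun m => by rw [Subsingleton.elim m 0]
          rw [hP0 t, Fin.prod_univ_one, pow_one, e0 (Fin.last 0)]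
          have ed : (Equiv.funUnique (Fin 1) (Fin N)) t = t 0 := e0 default
          rw [ed]
      _ = (∑ j, pi0 j * Real.log (pi0 j * (volume 𝒳).toReal / (volume (Xp j)).toReal))
            + ∑ j, pi0 j * V j := by
          rw [← Finset.sum_add_distrib]
          apply Finset.sum_congr rfl
          intro i _
          ring
  have hfinal_low : Bf K (Vlow K) = ∑ t : Fin (K + 1) → Fin N, p t *
      Real.log (p t * (volume 𝒳).toReal ^ (K + 1) / ∏ m, (volume (Xp (t m))).toReal) := by
    simp only [hBf]
    apply Finset.sum_congr rfl
    intro t _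
    rw [hVlowK, add_zero, hPfinal t]
  have hfinal_up : Bf K (Vup K) = ∑ t : Fin (K + 1) → Fin N, p t *
      Real.log (p t * (volume 𝒳).toReal ^ (K + 1) / ∏ m, (volume (Xp (t m))).toReal) := by
    simp only [hBf]
    apply Finset.sum_congr rfl
    intro t _
    rw [hVupK, add_zero, hPfinal t]
  constructor
  · calc Φ pi0 (Vlow 0) = Bf 0 (Vlow 0) := (hbase _).symm
      _ ≤ Bf K (Vlow K) := (hchain K le_rfl).1
      _ = _ := hfinal_low
  · calc (∑ t : Fin (K + 1) → Fin N, p t *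
          Real.log (p t * (volume 𝒳).toReal ^ (K + 1) / ∏ k, (volume (Xp (t k))).toReal))
        = Bf K (Vup K) := hfinal_up.symm
      _ ≤ Bf 0 (Vup 0) := (hchain K le_rfl).2
      _ = Φ pi0 (Vup 0) := hbase _
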